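/- For every Dyck word D, the number of peaks of D (occurrences of the factor ud in D) equals the number of occurrences of a factor of length 3 beginning with u and ending with d (occurrences of u⋆d) in the word Ψ(D)d, i.e., in Ψ(D) followed by one extra letter d. -/

import Mathlib

attribute [local instance] Classical.propDecidable

namespace DyckBij

/-- A word over `Bool` (`true` = up-step `u`, `false` = down-step `d`) is a Dyck word:
equally many `u`'s and `d`'s, and every prefix has at least as many `u`'s as `d`'s. -/
def IsDyck (w : List Bool) : Prop :=
  w.count false = w.count true ∧
    ∀ p : List Bool, p <+: w → p.count false ≤ p.count true

/-- `Matched w i j`: the `u` at (0-indexed) position `i` of `w` is matched (as in matched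
parentheses) with the `d` at position `j`, i.e. `w = A u B d C` with `B` a Dyck word,
`|A| = i` and `j = i + |B| + 1`. -/
def Matched (w : List Bool) (i j : ℕ) : Prop :=
  ∃ A B C : List Bool, IsDyck B ∧ w = A ++ true :: (B ++ false :: C) ∧
    A.length = i ∧ j = i + B.length + 1

/-- Positions `i` and `j` form a matched pair of steps of `w`. -/
def MatchPair (w : List Bool) (i j : ℕ) : Prop :=
  Matched w i j ∨ Matched w j i

/-- The 0-indexed reading order `σ^{(r)}` on a word of length `L`: the first `2r` positions
are read in order, and the remaining positions are read in zigzag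
`2r, L-1, 2r+1, L-2, …` (0-indexed). For `r = 0` this is the zigzag order `σ`. -/
def zigR (r L p : ℕ) : ℕ :=
  if p < 2 * r then p
  else if p % 2 = 0 then p / 2 + r
  else L + r - (p + 1) / 2

/-- The bijection `Ψ_r`: the `p`-th letter of `Ψ_r(w)` is `u` iff the match of the
`σ^{(r)}_p`-th step of `w` does not occur among the previously read steps
`σ^{(r)}_0, …, σ^{(r)}_{p-1}`. -/
noncomputable def psiR (r : ℕ) (w : List Bool) : List Bool :=
  List.ofFn fun p : Fin w.length =>
    if ∃ p' : ℕ, p' < (p : ℕ) ∧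
        MatchPair w (zigR r w.length p') (zigR r w.length (p : ℕ))
    then false else true

/-- The bijection `Ψ = Ψ_0`. -/
noncomputable def psi : List Bool → List Bool := psiR 0

/-- Number of tunnels of `w` with `|A| = |C| + 2r` (midpoint at `x = n + r`),
i.e. decompositions `w = A u B d C` with `B` a Dyck word; tunnels are indexed by `|A|`. -/
noncomputable def tunEq (r : ℕ) (w : List Bool) : ℕ :=
  {i : ℕ | ∃ A B C : List Bool, IsDyck B ∧ w = A ++ true :: (B ++ false :: C) ∧
    A.length = i ∧ A.length = C.length + 2 * r}.ncard

/-- Number of tunnels of `w` with `|A| > |C| + 2r` (midpoint in `x > n + r`). -/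
noncomputable def tunGt (r : ℕ) (w : List Bool) : ℕ :=
  {i : ℕ | ∃ A B C : List Bool, IsDyck B ∧ w = A ++ true :: (B ++ false :: C) ∧
    A.length = i ∧ C.length + 2 * r < A.length}.ncard

/-- Number of tunnels of `w` with `|A| ≤ |C| + 2r` (midpoint in `x ≤ n + r`). -/
noncomputable def tunLe (r : ℕ) (w : List Bool) : ℕ :=
  {i : ℕ | ∃ A B C : List Bool, IsDyck B ∧ w = A ++ true :: (B ++ false :: C) ∧
    A.length = i ∧ A.length ≤ C.length + 2 * r}.ncard

/-- Number of centered tunnels `ct(w)`. -/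
noncomputable def ctun (w : List Bool) : ℕ := tunEq 0 w

/-- Number of right tunnels `rt(w)`. -/
noncomputable def rtun (w : List Bool) : ℕ := tunGt 0 w

/-- Number of left tunnels `lt(w)`: tunnels with `|A| < |C|`. -/
noncomputable def ltun (w : List Bool) : ℕ :=
  {i : ℕ | ∃ A B C : List Bool, IsDyck B ∧ w = A ++ true :: (B ++ false :: C) ∧
    A.length = i ∧ A.length < C.length}.ncard

/-- Number of multitunnels of `w` with `|A| = |C| + 2r` (midpoint at `x = n + r`):
decompositions `w = A B C` with `B` a nonempty Dyck word, indexed by `(|A|, |B|)`. -/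
noncomputable def mtunEq (r : ℕ) (w : List Bool) : ℕ :=
  {q : ℕ × ℕ | ∃ A B C : List Bool, IsDyck B ∧ B ≠ [] ∧ w = A ++ B ++ C ∧
    A.length = q.1 ∧ B.length = q.2 ∧ A.length = C.length + 2 * r}.ncard

/-- Number of centered multitunnels `cmt(w)`. -/
noncomputable def cmtun (w : List Bool) : ℕ := mtunEq 0 w

/-- Number of hills `h(w)`: decompositions `w = X u d Y` with `X, Y` Dyck words. -/
noncomputable def numHills (w : List Bool) : ℕ :=
  {i : ℕ | ∃ X Y : List Bool, IsDyck X ∧ IsDyck Y ∧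
    w = X ++ true :: false :: Y ∧ X.length = i}.ncard

/-- Number of hills of `w` lying in `x > 2r`, i.e. with `|X| ≥ 2r`. -/
noncomputable def numHillsAfter (r : ℕ) (w : List Bool) : ℕ :=
  {i : ℕ | ∃ X Y : List Bool, IsDyck X ∧ IsDyck Y ∧
    w = X ++ true :: false :: Y ∧ X.length = i ∧ 2 * r ≤ X.length}.ncard

/-- Number of arches (equivalently, returns) `ret(w)`: decompositions
`w = X (u B d) Y` with `X, B, Y` Dyck words. -/
noncomputable def numArches (w : List Bool) : ℕ :=
  {i : ℕ | ∃ X B Y : List Bool, IsDyck X ∧ IsDyck B ∧ IsDyck Y ∧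
    w = X ++ true :: (B ++ false :: Y) ∧ X.length = i}.ncard

/-- Number of arches of `w` lying in `x ≥ 2r`, i.e. with `|X| ≥ 2r`. -/
noncomputable def numArchesAfter (r : ℕ) (w : List Bool) : ℕ :=
  {i : ℕ | ∃ X B Y : List Bool, IsDyck X ∧ IsDyck B ∧ IsDyck Y ∧
    w = X ++ true :: (B ++ false :: Y) ∧ X.length = i ∧ 2 * r ≤ X.length}.ncard

/-- Number of odd rises `odr(w)`: `u`-steps at odd 1-indexed positions
(even 0-indexed positions). -/
noncomputable def oddRises (w : List Bool) : ℕ :=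
  {p : ℕ | p < w.length ∧ p % 2 = 0 ∧ w.getD p false = true}.ncard

/-- Number of even rises `er(w)`: `u`-steps at even 1-indexed positions
(odd 0-indexed positions). -/
noncomputable def evenRises (w : List Bool) : ℕ :=
  {p : ℕ | p < w.length ∧ p % 2 = 1 ∧ w.getD p false = true}.ncard

/-- Number of odd rises of `w` at 1-indexed positions `> 2r`. -/
noncomputable def oddRisesAfter (r : ℕ) (w : List Bool) : ℕ :=
  {p : ℕ | p < w.length ∧ p % 2 = 0 ∧ 2 * r ≤ p ∧ w.getD p false = true}.ncard

/-- Number of even rises of `w` at 1-indexed positions `> 2r`. -/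
noncomputable def evenRisesAfter (r : ℕ) (w : List Bool) : ℕ :=
  {p : ℕ | p < w.length ∧ p % 2 = 1 ∧ 2 * r ≤ p ∧ w.getD p false = true}.ncard

/-- Number of `u`-steps of `w` at 1-indexed positions `≤ 2r`. -/
noncomputable def upstepsBefore (r : ℕ) (w : List Bool) : ℕ :=
  {p : ℕ | p < w.length ∧ p < 2 * r ∧ w.getD p false = true}.ncard

/-- Number of peaks of `w`: occurrences of the factor `u d`. -/
noncomputable def numPeaks (w : List Bool) : ℕ :=
  {i : ℕ | i + 2 ≤ w.length ∧ w.getD i false = true ∧ w.getD (i + 1) true = false}.ncard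

/-- Number of occurrences in `w` of a factor of length 3 beginning with `u`
and ending with `d` (occurrences of `u⋆d`). -/
noncomputable def numUStarD (w : List Bool) : ℕ :=
  {i : ℕ | i + 3 ≤ w.length ∧ w.getD i false = true ∧ w.getD (i + 2) true = false}.ncard

/-- `ih(w)`: 1 if `w` begins with the factor `u d`, else 0. -/
noncomputable def initHill (w : List Bool) : ℕ :=
  if w.take 2 = [true, false] then 1 else 0

/-- `fh(w)`: 1 if `w = X u d` with `X` a Dyck word, else 0. -/
noncomputable def finHill (w : List Bool) : ℕ :=
  if ∃ X : List Bool, IsDyck X ∧ w = X ++ [true, false] then 1 else 0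

/-- `π` avoids the pattern 321. -/
def Avoids321 {n : ℕ} (π : Equiv.Perm (Fin n)) : Prop :=
  ¬ ∃ i j k : Fin n, i < j ∧ j < k ∧ π k < π j ∧ π j < π i

/-- `π` avoids the pattern 132. -/
def Avoids132 {n : ℕ} (π : Equiv.Perm (Fin n)) : Prop :=
  ¬ ∃ i j k : Fin n, i < j ∧ j < k ∧ π i < π k ∧ π k < π j

/-- Number of fixed points of `π`. -/
noncomputable def fixedPts {n : ℕ} (π : Equiv.Perm (Fin n)) : ℕ :=
  {i : Fin n | π i = i}.ncard

/-- Number of excedances of `π`. -/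
noncomputable def excedances {n : ℕ} (π : Equiv.Perm (Fin n)) : ℕ :=
  {i : Fin n | i < π i}.ncard

/-- Number of descents of `π`. -/
noncomputable def descents {n : ℕ} (π : Equiv.Perm (Fin n)) : ℕ :=
  {i : ℕ | ∃ (h1 : i < n) (h2 : i + 1 < n), π ⟨i + 1, h2⟩ < π ⟨i, h1⟩}.ncard

/-- `α_r(π) = #{i : π(i) = i + r}` (stated 0-indexed, equivalent to the 1-indexed version). -/
noncomputable def alphaStat {n : ℕ} (r : ℕ) (π : Equiv.Perm (Fin n)) : ℕ :=
  {i : Fin n | (π i : ℕ) = (i : ℕ) + r}.ncard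

/-- `β_r(π) = #{i : i > r, π(i) = i}` (for 1-indexed `i`; 0-indexed this is `r ≤ i`). -/
noncomputable def betaStat {n : ℕ} (r : ℕ) (π : Equiv.Perm (Fin n)) : ℕ :=
  {i : Fin n | r ≤ (i : ℕ) ∧ π i = i}.ncard

def bal (w : List Bool) (k : ℕ) : ℤ :=
  ((w.take k).count true : ℤ) - (w.take k).count false

lemma length_eq_counts (w : List Bool) : w.length = w.count true + w.count false := by
  induction w with
  | nil => simp
  | cons a l ih =>
    cases a <;> simp only [List.count_cons, List.length_cons, ih] <;> simp <;> omega

lemma bal_zero (w : List Bool) : bal w 0 = 0 := by simp [bal]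

lemma bal_nonneg {w : List Bool} (hD : IsDyck w) (k : ℕ) : 0 ≤ bal w k := by
  have := hD.2 (w.take k) (List.take_prefix _ _)
  simp [bal]; exact_mod_cast this

lemma bal_of_length_le {w : List Bool} {k : ℕ} (h : w.length ≤ k) (hD : IsDyck w) :
    bal w k = 0 := by
  rw [bal, List.take_of_length_le h, hD.1]; ring

lemma bal_succ {w : List Bool} {k : ℕ} (h : k < w.length) :
    bal w (k+1) = bal w k + (if w.getD k false = true then 1 else -1) := by
  have : w.take (k+1) = w.take k ++ [w[k]] := by
    rw [List.take_succ, List.getElem?_eq_getElem h]; rfl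
  rw [List.getD_eq_getElem _ _ h]
  simp only [bal, this, List.count_append]
  cases hw : w[k] <;> simp [hw] <;> push_cast <;> ring

lemma bal_take_slice (w : List Bool) {a t : ℕ} (ha : a ≤ t) :
    bal w t = bal w a + bal (w.drop a) (t - a) := by
  have h1 : w.take t = w.take a ++ (w.drop a).take (t - a) := by
    rw [← List.take_add]; congr 1; omega
  simp only [bal, h1, List.count_append]
  push_cast; ring

lemma isDyck_iff_bal (w : List Bool) :
    IsDyck w ↔ bal w w.length = 0 ∧ ∀ k, k ≤ w.length → 0 ≤ bal w k := by
  constructor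
  · intro hD
    exact ⟨bal_of_length_le le_rfl hD, fun k _ => bal_nonneg hD k⟩
  · rintro ⟨h0, hk⟩
    constructor
    · have := h0
      simp [bal, List.take_length] at this
      omega
    · intro p hp
      have hlen := hp.length_le
      have hpt : p = w.take p.length := List.prefix_iff_eq_take.mp hp
      have := hk p.length hlen
      rw [bal, ← hpt] at this
      omega

lemma matched_iff (w : List Bool) (a b : ℕ) :
    Matched w a b ↔ a < b ∧ b < w.length ∧ w.getD a false = true ∧
      w.getD b true = false ∧ bal w b = bal w (a+1) ∧
      ∀ t, a < t → t ≤ b → bal w (a+1) ≤ bal w t := by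
  constructor
  · rintro ⟨A, B, C, hB, rfl, rfl, rfl⟩
    have hab : A.length < A.length + B.length + 1 := by omega
    have hlen : (A ++ true :: (B ++ false :: C)).length
        = A.length + B.length + C.length + 2 := by simp; omega
    have hb : A.length + B.length + 1 < (A ++ true :: (B ++ false :: C)).length := by omega
    have hga : (A ++ true :: (B ++ false :: C)).getD A.length false = true := by
      rw [List.getD_append_right _ _ _ _ le_rfl]; simp
    have hre : A ++ true :: (B ++ false :: C) = (A ++ true :: B) ++ false :: C := by
      simp
    have hgb : (A ++ true :: (B ++ false :: C)).getD (A.length + B.length + 1) true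
        = false := by
      rw [hre, List.getD_append_right _ _ _ _ (by simp; omega)]
      have : A.length + B.length + 1 - (A ++ true :: B).length = 0 := by simp
      rw [this]; simp
    have hdrop : (A ++ true :: (B ++ false :: C)).drop (A.length + 1) = B ++ false :: C := by
      rw [List.drop_append]
      simp
    have hbalt : ∀ t, A.length < t → t ≤ A.length + B.length + 1 →
        bal (A ++ true :: (B ++ false :: C)) (A.length + 1)
          ≤ bal (A ++ true :: (B ++ false :: C)) t ∧
        (t = A.length + B.length + 1 →
          bal (A ++ true :: (B ++ false :: C)) t
            = bal (A ++ true :: (B ++ false :: C)) (A.length + 1) + bal B B.length) := by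
      intro t h1 h2
      have hslice := bal_take_slice (A ++ true :: (B ++ false :: C)) (a := A.length + 1) (t := t) (by omega)
      rw [hdrop] at hslice
      have htake : (B ++ false :: C).take (t - (A.length + 1)) = B.take (t - (A.length + 1)) := by
        rw [List.take_append]
        have : t - (A.length + 1) - B.length = 0 := by omega
        rw [this]; simp
      have hbalB : bal (B ++ false :: C) (t - (A.length + 1)) = bal B (t - (A.length + 1)) := by
        simp only [bal, htake]
      rw [hbalB] at hslice
      have hnn := bal_nonneg hB (t - (A.length + 1))
      constructor
      · omega
      · intro ht
        have : t - (A.length + 1) = B.length := by omega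
        rw [hslice, this]
    constructor; · omega
    constructor; · omega
    refine ⟨hga, hgb, ?_, ?_⟩
    · have := hbalt (A.length + B.length + 1) (by omega) le_rfl
      have h0 : bal B B.length = 0 := bal_of_length_le le_rfl hB
      have := this.2 rfl
      omega
    · intro t h1 h2
      exact (hbalt t h1 h2).1
  · rintro ⟨hab, hb, hga, hgb, hbal, hpre⟩
    have ha : a < w.length := by omega
    refine ⟨w.take a, (w.drop (a+1)).take (b - (a+1)), w.drop (b+1), ?_, ?_, ?_, ?_⟩
    · -- IsDyck B
      set B := (w.drop (a+1)).take (b - (a+1)) with hBdef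
      have hlenB : B.length = b - (a+1) := by
        simp [hBdef, List.length_take, List.length_drop]; omega
      have hbalB : ∀ k, k ≤ b - (a+1) → bal B k = bal w (a+1+k) - bal w (a+1) := by
        intro k hk
        have hslice := bal_take_slice w (a := a+1) (t := a+1+k) (by omega)
        have : bal (w.drop (a+1)) k = bal B k := by
          simp only [bal, hBdef, List.take_take]
          rw [min_eq_left hk]
        have hkk : a + 1 + k - (a + 1) = k := by omega
        rw [hkk, this] at hslice
        omega
      rw [isDyck_iff_bal]
      constructor
      · rw [hlenB, hbalB _ le_rfl]
        have : a + 1 + (b - (a+1)) = b := by omega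
        rw [this]; omega
      · intro k hk
        rw [hlenB] at hk
        rw [hbalB k hk]
        have := hpre (a+1+k) (by omega) (by omega)
        omega
    · -- decomposition
      have h1 : w = w.take a ++ w.drop a := (List.take_append_drop a w).symm
      have h2 : w.drop a = w[a] :: w.drop (a+1) := List.drop_eq_getElem_cons ha
      have h3 : w[a] = true := by rw [← List.getD_eq_getElem w false ha]; exact hga
      have h4 : w.drop (a+1) = (w.drop (a+1)).take (b - (a+1)) ++ (w.drop (a+1)).drop (b - (a+1)) :=
        (List.take_append_drop _ _).symm
      have h5 : (w.drop (a+1)).drop (b - (a+1)) = w.drop b := by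
        rw [List.drop_drop]; congr 1; omega
      have h6 : w.drop b = w[b] :: w.drop (b+1) := List.drop_eq_getElem_cons hb
      have h7 : w[b] = false := by rw [← List.getD_eq_getElem w true hb]; exact hgb
      have hfin := h1
      rw [h2, h3] at hfin
      rw [h4, h5, h6, h7] at hfin
      simpa using hfin
    · exact List.length_take_of_le (by omega)
    · have : ((w.drop (a+1)).take (b - (a+1))).length = b - (a+1) := by
        simp [List.length_take, List.length_drop]; omega
      rw [this]; omega


lemma matched_lt {w : List Bool} {a b : ℕ} (h : Matched w a b) : a < b :=
  ((matched_iff w a b).mp h).1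

lemma matched_lt_length {w : List Bool} {a b : ℕ} (h : Matched w a b) : b < w.length :=
  ((matched_iff w a b).mp h).2.1

lemma matched_getD_left {w : List Bool} {a b : ℕ} (h : Matched w a b) :
    w.getD a false = true := ((matched_iff w a b).mp h).2.2.1

lemma matched_getD_right {w : List Bool} {a b : ℕ} (h : Matched w a b) :
    w.getD b true = false := ((matched_iff w a b).mp h).2.2.2.1

lemma getD_congr {w : List Bool} {k : ℕ} (h : k < w.length) (d d' : Bool) :
    w.getD k d = w.getD k d' := by
  rw [List.getD_eq_getElem (l := w) (d := d) h, List.getD_eq_getElem (l := w) (d := d') h]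

lemma uniq_right {w : List Bool} {a b b' : ℕ} (h : Matched w a b) (h' : Matched w a b') :
    b = b' := by
  rw [matched_iff] at h h'
  by_contra hne
  rcases Nat.lt_or_ge b b' with hlt | hge
  · -- bal (b+1) = bal b - 1 < bal (a+1), contradicting h' prefix
    have hstep := bal_succ (w := w) (k := b) (by omega)
    rw [if_neg (by rw [getD_congr (by omega : b < w.length) false true, h.2.2.2.1]; simp)] at hstep
    have := h'.2.2.2.2.2 (b+1) (by omega) (by omega)
    omega
  · have hlt : b' < b := by omega
    have hstep := bal_succ (w := w) (k := b') (by omega)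
    rw [if_neg (by rw [getD_congr (by omega : b' < w.length) false true, h'.2.2.2.1]; simp)] at hstep
    have := h.2.2.2.2.2 (b'+1) (by omega) (by omega)
    omega

lemma uniq_left {w : List Bool} {a a' b : ℕ} (h : Matched w a b) (h' : Matched w a' b) :
    a = a' := by
  rw [matched_iff] at h h'
  by_contra hne
  rcases Nat.lt_or_ge a a' with hlt | hge
  · have hstep := bal_succ (w := w) (k := a') (by omega)
    rw [if_pos h'.2.2.1] at hstep
    have h1 := h.2.2.2.2.2 a' (by omega) (by omega)
    have h2 := h.2.2.2.2.2 (a'+1) (by omega) (by omega)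
    omega
  · have hlt : a' < a := by omega
    have hstep := bal_succ (w := w) (k := a) (by omega)
    rw [if_pos h.2.2.1] at hstep
    have h1 := h'.2.2.2.2.2 a (by omega) (by omega)
    have h2 := h'.2.2.2.2.2 (a+1) (by omega) (by omega)
    omega

lemma no_cross {w : List Bool} {a b c d : ℕ} (h1 : Matched w a c) (h2 : Matched w b d)
    (hab : a < b) (hbc : b < c) (hcd : c < d) : False := by
  rw [matched_iff] at h1 h2
  -- bal (b+1) = bal b + 1, bal b ≥ bal (a+1), bal c = bal (a+1), bal (c+1) = bal c - 1
  have hs1 := bal_succ (w := w) (k := b) (by omega)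
  rw [if_pos h2.2.2.1] at hs1
  have hs2 := bal_succ (w := w) (k := c) (by omega)
  rw [if_neg (by rw [getD_congr (by omega : c < w.length) false true, h1.2.2.2.1]; simp)] at hs2
  have hA := h1.2.2.2.2.2 b (by omega) (by omega)
  have hB := h2.2.2.2.2.2 (c+1) (by omega) (by omega)
  omega

lemma exists_matched_of_true {w : List Bool} (hD : IsDyck w) {i : ℕ} (hi : i < w.length)
    (hw : w.getD i false = true) : ∃ j, Matched w i j := by
  classical
  have hstep := bal_succ hi
  rw [if_pos hw] at hstep
  have hnn : 0 ≤ bal w i := bal_nonneg hD i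
  have hi1 : i + 1 < w.length := by
    by_contra hcon
    have : bal w (i+1) = 0 := bal_of_length_le (by omega) hD
    omega
  have hL0 : bal w (w.length - 1 + 1) = 0 := bal_of_length_le (by omega) hD
  obtain ⟨m, ⟨him, hbalm1, hmlt⟩, hmin⟩ :
      ∃ m, (i < m ∧ bal w (m+1) ≤ bal w i ∧ m < w.length) ∧
        ∀ t, i < t → t < m → bal w i + 1 ≤ bal w (t+1) := by
    have hex : ∃ m, i < m ∧ bal w (m+1) ≤ bal w i := ⟨w.length - 1, by omega, by omega⟩
    refine ⟨Nat.find hex, ⟨(Nat.find_spec hex).1, (Nat.find_spec hex).2, ?_⟩, ?_⟩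
    · have : Nat.find hex ≤ w.length - 1 := Nat.find_min' hex ⟨by omega, by omega⟩
      omega
    · intro t h1 h2
      have h3 := Nat.find_min hex h2
      push_neg at h3
      have := h3 h1
      omega
  have hbalm : bal w i + 1 ≤ bal w m := by
    rcases Nat.eq_or_lt_of_le (Nat.succ_le_of_lt him) with he | hl
    · have h4 : bal w (i+1) = bal w m := by rw [← he, Nat.succ_eq_add_one]
      omega
    · have := hmin (m-1) (by omega) (by omega)
      have hmm : m - 1 + 1 = m := by omega
      rw [hmm] at this; omega
  have hstepm := bal_succ hmlt
  have hwm : ¬ (w.getD m false = true) := by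
    intro hcon
    rw [if_pos hcon] at hstepm
    omega
  rw [if_neg hwm] at hstepm
  refine ⟨m, (matched_iff w i m).mpr ⟨him, hmlt, hw, ?_, by omega, ?_⟩⟩
  · rw [getD_congr hmlt true false]
    simpa using hwm
  · intro t h1 h2
    rcases Nat.eq_or_lt_of_le (Nat.succ_le_of_lt h1) with he | hl
    · have h4 : bal w (i+1) = bal w t := by rw [← he, Nat.succ_eq_add_one]
      omega
    · have := hmin (t-1) (by omega) (by omega)
      have htt : t - 1 + 1 = t := by omega
      rw [htt] at this; omega

lemma exists_matched_of_false {w : List Bool} (hD : IsDyck w) {i : ℕ} (hi : i < w.length)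
    (hw : w.getD i true = false) : ∃ j, Matched w j i := by
  classical
  have hstep := bal_succ hi
  rw [if_neg (by rw [getD_congr hi false true, hw]; simp)] at hstep
  have hnn : 0 ≤ bal w (i+1) := bal_nonneg hD (i+1)
  have hb0 : bal w 0 = 0 := bal_zero w
  obtain ⟨m, ⟨hPm, hmle⟩, hmax'⟩ :
      ∃ m, (bal w m ≤ bal w (i+1) ∧ m ≤ i) ∧
        ∀ t, m < t → t ≤ i → ¬ bal w t ≤ bal w (i+1) := by
    refine ⟨Nat.findGreatest (fun t => bal w t ≤ bal w (i+1)) i,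
      ⟨Nat.findGreatest_spec (P := fun t => bal w t ≤ bal w (i+1)) (Nat.zero_le i) (show bal w 0 ≤ bal w (i+1) by rw [bal_zero]; exact hnn), Nat.findGreatest_le i⟩, ?_⟩
    intro t h1 h2
    exact Nat.findGreatest_is_greatest (P := fun t => bal w t ≤ bal w (i+1)) h1 h2
  have hmax : ∀ t, m < t → t ≤ i → bal w (i+1) + 1 ≤ bal w t := by
    intro t h1 h2
    have := hmax' t h1 h2
    omega
  have hmi : m < i := by
    rcases Nat.eq_or_lt_of_le hmle with he | hl
    · exfalso
      have h4 : bal w m = bal w i := by rw [he]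
      omega
    · exact hl
  have hstepm := bal_succ (w := w) (k := m) (by omega)
  have hbm1 : bal w (i+1) + 1 ≤ bal w (m+1) := hmax (m+1) (by omega) (by omega)
  have hwm : w.getD m false = true := by
    by_contra hcon
    rw [if_neg hcon] at hstepm
    omega
  rw [if_pos hwm] at hstepm
  refine ⟨m, (matched_iff w m i).mpr ⟨hmi, hi, hwm, hw, by omega, ?_⟩⟩
  intro t h1 h2
  have := hmax t h1 h2
  omega


lemma matchPair_symm {w : List Bool} {i j : ℕ} (h : MatchPair w i j) : MatchPair w j i :=
  h.symm

lemma matchPair_right_unique {w : List Bool} {q j j' : ℕ} (h : MatchPair w q j)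
    (h' : MatchPair w q j') : j = j' := by
  rcases h with h | h <;> rcases h' with h' | h'
  · exact uniq_right h h'
  · have hq : q < w.length := lt_trans (matched_lt h) (matched_lt_length h)
    have h1 := matched_getD_left h
    rw [getD_congr hq false true, matched_getD_right h'] at h1
    exact absurd h1 (by simp)
  · have hq : q < w.length := matched_lt_length h
    have h1 := matched_getD_left h'
    rw [getD_congr hq false true, matched_getD_right h] at h1
    exact absurd h1 (by simp)
  · exact uniq_left h h'

lemma matchPair_ne {w : List Bool} {i j : ℕ} (h : MatchPair w i j) : i ≠ j := by
  rcases h with h | h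
  · exact Nat.ne_of_lt (matched_lt h)
  · exact (Nat.ne_of_lt (matched_lt h)).symm

lemma matchPair_lt_length {w : List Bool} {i j : ℕ} (h : MatchPair w i j) : j < w.length := by
  rcases h with h | h
  · exact matched_lt_length h
  · have := (matched_iff w j i).mp h
    omega

noncomputable def pm (w : List Bool) (q : ℕ) : ℕ :=
  if h : ∃ j, MatchPair w q j then h.choose else 0

lemma pm_eq {w : List Bool} {q j : ℕ} (h : MatchPair w q j) : pm w q = j := by
  have hex : ∃ j, MatchPair w q j := ⟨j, h⟩
  rw [pm, dif_pos hex]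
  exact matchPair_right_unique hex.choose_spec h

lemma pm_spec {w : List Bool} (hD : IsDyck w) {q : ℕ} (hq : q < w.length) :
    MatchPair w q (pm w q) := by
  rcases Bool.eq_false_or_eq_true (w.getD q false) with ht | hf
  rotate_left
  · have hf' : w.getD q true = false := by rw [getD_congr hq true false]; exact hf
    obtain ⟨j, hj⟩ := exists_matched_of_false hD hq hf'
    rw [pm_eq (Or.inr hj)]
    exact Or.inr hj
  · obtain ⟨j, hj⟩ := exists_matched_of_true hD hq ht
    rw [pm_eq (Or.inl hj)]
    exact Or.inl hj

lemma pm_pm {w : List Bool} (hD : IsDyck w) {q : ℕ} (hq : q < w.length) :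
    pm w (pm w q) = q :=
  pm_eq (matchPair_symm (pm_spec hD hq))

lemma pm_ne {w : List Bool} (hD : IsDyck w) {q : ℕ} (hq : q < w.length) : pm w q ≠ q :=
  fun h => (matchPair_ne (pm_spec hD hq)) h.symm

lemma pm_lt_length {w : List Bool} (hD : IsDyck w) {q : ℕ} (hq : q < w.length) :
    pm w q < w.length := matchPair_lt_length (pm_spec hD hq)

lemma pm_inj {w : List Bool} (hD : IsDyck w) {a b : ℕ} (ha : a < w.length)
    (hb : b < w.length) (h : pm w a = pm w b) : a = b := by
  have := pm_pm hD ha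
  rw [h, pm_pm hD hb] at this
  exact this.symm

lemma matched_of_matchPair_lt {w : List Bool} {a b : ℕ} (h : MatchPair w a b) (hab : a < b) :
    Matched w a b := by
  rcases h with h | h
  · exact h
  · exact absurd (matched_lt h) (by omega)


def rho (L q : ℕ) : ℕ := if 2*q < L then 2*q else 2*L - (2*q+1)

lemma zig_even {L p : ℕ} (h : p % 2 = 0) : zigR 0 L p = p / 2 := by
  unfold zigR; split_ifs <;> omega

lemma zig_odd {L p : ℕ} (h : p % 2 = 1) : zigR 0 L p = L - (p+1)/2 := by
  unfold zigR; split_ifs <;> omega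

lemma zig_lt {L p : ℕ} (hL2 : L % 2 = 0) (hp : p < L) : zigR 0 L p < L := by
  unfold zigR; split_ifs <;> omega

lemma rho_lt {L q : ℕ} (hL2 : L % 2 = 0) (hq : q < L) : rho L q < L := by
  unfold rho; split_ifs <;> omega

lemma zig_rho {L q : ℕ} (hq : q < L) : zigR 0 L (rho L q) = q := by
  unfold rho zigR; split_ifs <;> omega

lemma rho_zig {L p : ℕ} (hL2 : L % 2 = 0) (hp : p < L) : rho L (zigR 0 L p) = p := by
  unfold rho zigR; split_ifs <;> omega

lemma psiR_length (w : List Bool) : (psiR 0 w).length = w.length := by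
  simp [psiR]

lemma psi_getD (w : List Bool) (p : ℕ) (hp : p < w.length) (d : Bool) :
    (psiR 0 w).getD p d =
      if ∃ p' : ℕ, p' < p ∧ MatchPair w (zigR 0 w.length p') (zigR 0 w.length p)
      then false else true := by
  have hlen : (psiR 0 w).length = w.length := psiR_length w
  rw [List.getD_eq_getElem (l := psiR 0 w) (d := d) (by omega)]
  simp only [psiR, List.getElem_ofFn]

lemma psi_true_iff {w : List Bool} (hD : IsDyck w) (hL2 : w.length % 2 = 0) {p : ℕ}
    (hp : p < w.length) (d : Bool) :
    ((psiR 0 w).getD p d = true) ↔ p ≤ rho w.length (pm w (zigR 0 w.length p)) := by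
  have hzp : zigR 0 w.length p < w.length := zig_lt hL2 hp
  have hcond : (∃ p' : ℕ, p' < p ∧ MatchPair w (zigR 0 w.length p') (zigR 0 w.length p))
      ↔ rho w.length (pm w (zigR 0 w.length p)) < p := by
    constructor
    · rintro ⟨p', hp', hmp⟩
      have he : pm w (zigR 0 w.length p) = zigR 0 w.length p' := pm_eq (matchPair_symm hmp)
      rw [he, rho_zig hL2 (by omega)]
      exact hp'
    · intro h
      refine ⟨rho w.length (pm w (zigR 0 w.length p)), h, ?_⟩
      rw [zig_rho (pm_lt_length hD hzp)]
      exact matchPair_symm (pm_spec hD hzp)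
  rw [psi_getD w p hp d]
  split_ifs with h
  · simp only [Bool.false_eq_true, false_iff]
    rw [hcond] at h
    omega
  · simp only [true_iff]
    rw [hcond] at h
    omega

lemma psi_false_iff {w : List Bool} (hD : IsDyck w) (hL2 : w.length % 2 = 0) {p : ℕ}
    (hp : p < w.length) (d : Bool) :
    ((psiR 0 w).getD p d = false) ↔ rho w.length (pm w (zigR 0 w.length p)) < p := by
  have h1 := psi_true_iff hD hL2 hp d
  constructor
  · intro h
    by_contra hc
    have h2 : (psiR 0 w).getD p d = true := h1.mpr (by omega)
    rw [h] at h2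
    exact absurd h2 (by simp)
  · intro h
    rcases Bool.eq_false_or_eq_true ((psiR 0 w).getD p d) with h2 | h2
    · exfalso
      have := h1.mp h2
      omega
    · exact h2



/-- for every Dyck word `D`, the number of peaks of `D` equals the number of
occurrences of `u⋆d` in `Ψ(D)d` (i.e. `Ψ(D)` followed by one extra `d`). -/
theorem numPeaks_eq_numUStarD_psi (D : List Bool) (hD : IsDyck D) :
    numPeaks D = numUStarD (psi D ++ [false]) := by
  set L := D.length with hLdef
  have hL2 : L % 2 = 0 := by
    have h1 := length_eq_counts D
    have h2 := hD.1
    omega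
  set f : ℕ → ℕ := fun j => if 2*j+2 ≤ L then 2*j else 2*L - (2*j+3) with hfdef
  have hlenpsi : (psi D).length = L := psiR_length D
  have hlenQ : (psi D ++ [false]).length = L + 1 := by
    simp [hlenpsi]
  have hg1 : ∀ (p : ℕ) (d : Bool), p < L → (psi D ++ [false]).getD p d = (psi D).getD p d := by
    intro p d hp
    exact List.getD_append _ _ _ _ (by omega)
  have hg2 : (psi D ++ [false]).getD L true = false := by
    rw [List.getD_append_right _ _ _ _ (by omega)]
    simp [hlenpsi]
  have hP : ∀ j : ℕ, (j + 2 ≤ D.length ∧ D.getD j false = true ∧ D.getD (j+1) true = false)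
      ↔ Matched D j (j+1) := by
    intro j
    rw [matched_iff]
    constructor
    · rintro ⟨h1, h2, h3⟩
      refine ⟨by omega, by omega, h2, h3, rfl, ?_⟩
      intro t ht1 ht2
      have ht : t = j + 1 := by omega
      rw [ht]
    · rintro ⟨h1, h2, h3, h4, _, _⟩
      exact ⟨by omega, h3, h4⟩
  have key : ∀ i : ℕ,
      (i + 3 ≤ L + 1 ∧ (psi D ++ [false]).getD i false = true ∧
        (psi D ++ [false]).getD (i+2) true = false)
      ↔ ∃ j, Matched D j (j+1) ∧ f j = i := by
    intro i
    constructor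
    · rintro ⟨h1, h2, h3⟩
      have hiL : i + 2 ≤ L := by omega
      have hi : i < L := by omega
      rw [hg1 i false hi] at h2
      have h2' : i ≤ rho L (pm D (zigR 0 L i)) := (psi_true_iff hD hL2 hi false).mp h2
      rcases Nat.lt_or_ge (i+2) L with hlt | hge
      · rw [hg1 (i+2) true hlt] at h3
        have h3' : rho L (pm D (zigR 0 L (i+2))) < i + 2 :=
          (psi_false_iff hD hL2 hlt true).mp h3
        rcases Nat.mod_two_eq_zero_or_one i with hpar | hpar
        · -- i even
          have hzi : zigR 0 L i = i / 2 := zig_even hpar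
          have hzi2 : zigR 0 L (i+2) = i / 2 + 1 := by
            rw [zig_even (by omega)]; omega
          rw [hzi] at h2'
          rw [hzi2] at h3'
          set q := i / 2 with hqdef
          have hqL : q < L := by omega
          have hq1L : q + 1 < L := by omega
          set x := pm D q with hxdef
          set y := pm D (q+1) with hydef
          have hxq : x ≠ q := pm_ne hD hqL
          have hyq1 : y ≠ q + 1 := pm_ne hD hq1L
          have hxL : x < L := pm_lt_length hD hqL
          have hyL : y < L := pm_lt_length hD hq1L
          have hxb : q < x ∧ x + q + 1 ≤ L := by
            have hrho : rho L x = (if 2*x < L then 2*x else 2*L - (2*x+1)) := rfl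
            rw [hrho] at h2'
            split_ifs at h2' <;> omega
          have hyb : y ≤ q ∨ L ≤ y + q + 1 := by
            have hrho : rho L y = (if 2*y < L then 2*y else 2*L - (2*y+1)) := rfl
            rw [hrho] at h3'
            split_ifs at h3' <;> omega
          have hMx : Matched D q x := matched_of_matchPair_lt (pm_spec hD hqL) hxb.1
          by_cases hyeq : y = q
          · -- peak at q
            have hx1 : x = q + 1 := by
              have h := pm_pm hD hq1L
              rw [← hydef, hyeq] at h
              rw [hxdef]
              exact h
            refine ⟨q, by rwa [hx1] at hMx, ?_⟩
            simp only [hfdef]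
            rw [if_pos (by omega)]
            omega
          · exfalso
            have hxq1 : x ≠ q + 1 := by
              intro hcon
              apply hyeq
              rw [hydef, ← hcon, hxdef]
              exact pm_pm hD hqL
            rcases hyb with hyle | hyge
            · -- y < q : crossing
              have hylt : y < q := by omega
              have hMy : Matched D y (q+1) :=
                matched_of_matchPair_lt (matchPair_symm (pm_spec hD hq1L)) (by omega)
              exact no_cross hMy hMx hylt (by omega) (by omega)
            · -- y ≥ L - q - 1 : crossing
              have hxy : x ≠ y := by
                intro hcon
                have := pm_inj hD hqL hq1L (by rw [← hxdef, ← hydef, hcon])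
                omega
              have hylarge : q + 1 < y := by omega
              have hMy : Matched D (q+1) y :=
                matched_of_matchPair_lt (pm_spec hD hq1L) hylarge
              exact no_cross hMx hMy (by omega) (by omega) (by omega)
        · -- i odd
          have hzi : zigR 0 L i = L - (i+1)/2 := zig_odd hpar
          have hzi2 : zigR 0 L (i+2) = L - (i+1)/2 - 1 := by
            rw [zig_odd (by omega)]; omega
          rw [hzi] at h2'
          rw [hzi2] at h3'
          set q := L - (i+1)/2 with hqdef
          have hq2 : L - (i+1)/2 - 1 = q - 1 := rfl
          rw [hq2] at h3'
          have hqbig : 2 * q ≥ L + 2 ∧ q < L := by omega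
          have hqL : q < L := hqbig.2
          have hq1L : q - 1 < L := by omega
          set x := pm D q with hxdef
          set y := pm D (q-1) with hydef
          have hxq : x ≠ q := pm_ne hD hqL
          have hyq1 : y ≠ q - 1 := pm_ne hD hq1L
          have hxL : x < L := pm_lt_length hD hqL
          have hyL : y < L := pm_lt_length hD hq1L
          have hxb : i / 2 + 1 ≤ x ∧ x < q := by
            have hrho : rho L x = (if 2*x < L then 2*x else 2*L - (2*x+1)) := rfl
            rw [hrho] at h2'
            split_ifs at h2' <;> omega
          have hyb : y ≤ i/2 + 1 ∨ q ≤ y := by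
            have hrho : rho L y = (if 2*y < L then 2*y else 2*L - (2*y+1)) := rfl
            rw [hrho] at h3'
            split_ifs at h3' <;> omega
          have hMx : Matched D x q :=
            matched_of_matchPair_lt (matchPair_symm (pm_spec hD hqL)) hxb.2
          by_cases hyeq : y = q
          · -- peak at q-1
            have hMp : Matched D (q-1) q := by
              have h := matched_of_matchPair_lt (pm_spec hD hq1L)
                (show q - 1 < pm D (q-1) by rw [← hydef]; omega)
              rw [← hydef, hyeq] at h
              exact h
            refine ⟨q - 1, ?_, ?_⟩
            · have hq1 : q - 1 + 1 = q := by omega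
              rwa [hq1]
            · simp only [hfdef]
              rw [if_neg (by omega)]
              omega
          · exfalso
            have hxq1 : x ≠ q - 1 := by
              intro hcon
              apply hyeq
              rw [hydef, ← hcon, hxdef]
              exact pm_pm hD hqL
            rcases hyb with hyle | hyge
            · -- y ≤ k+1 : crossing
              have hylt : y < q - 1 := by omega
              have hMy : Matched D y (q-1) :=
                matched_of_matchPair_lt (matchPair_symm (pm_spec hD hq1L)) hylt
              have hxy : x ≠ y := by
                intro hcon
                have := pm_inj hD hqL hq1L (by rw [← hxdef, ← hydef, hcon])
                omega
              exact no_cross hMy hMx (by omega) (by omega) (by omega)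
            · -- y > q : crossing
              have hygt : q - 1 < y := by omega
              have hMy : Matched D (q-1) y :=
                matched_of_matchPair_lt (pm_spec hD hq1L) hygt
              exact no_cross hMx hMy (by omega) (by omega) (by omega)
      · -- i + 2 = L
        have hieq : i + 2 = L := by omega
        have hpar : i % 2 = 0 := by omega
        have hzi : zigR 0 L i = i / 2 := zig_even hpar
        rw [hzi] at h2'
        set q := i / 2 with hqdef
        have hqL : q < L := by omega
        set x := pm D q with hxdef
        have hxq : x ≠ q := pm_ne hD hqL
        have hxL : x < L := pm_lt_length hD hqL
        have hxb : x = q + 1 := by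
          have hrho : rho L x = (if 2*x < L then 2*x else 2*L - (2*x+1)) := rfl
          rw [hrho] at h2'
          split_ifs at h2' <;> omega
        have hMx : Matched D q (q+1) := by
          have h := matched_of_matchPair_lt (pm_spec hD hqL)
            (show q < pm D q by rw [← hxdef]; omega)
          rw [← hxdef, hxb] at h
          exact h
        refine ⟨q, hMx, ?_⟩
        simp only [hfdef]
        rw [if_pos (by omega)]
        omega
    · rintro ⟨j, hM, rfl⟩
      have hj1L : j + 1 < L := matched_lt_length hM
      have hpmj : pm D j = j + 1 := pm_eq (Or.inl hM)
      have hpmj1 : pm D (j+1) = j := pm_eq (Or.inr hM)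
      by_cases hcase : 2*j + 2 ≤ L
      · have hfj : f j = 2*j := by simp only [hfdef]; rw [if_pos hcase]
        rw [hfj]
        have hiL : 2*j < L := by omega
        refine ⟨by omega, ?_, ?_⟩
        · rw [hg1 _ _ hiL]
          refine (psi_true_iff hD hL2 hiL false).mpr ?_
          have hz : zigR 0 L (2*j) = j := by rw [zig_even (by omega)]; omega
          rw [hz, hpmj]
          have hrho : rho L (j+1) = (if 2*(j+1) < L then 2*(j+1) else 2*L - (2*(j+1)+1)) := rfl
          rw [hrho]
          split_ifs <;> omega
        · rcases Nat.lt_or_ge (2*j+2) L with hlt2 | hge2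
          · rw [hg1 _ _ hlt2]
            refine (psi_false_iff hD hL2 hlt2 true).mpr ?_
            have hz : zigR 0 L (2*j+2) = j + 1 := by rw [zig_even (by omega)]; omega
            rw [hz, hpmj1]
            have hrho : rho L j = (if 2*j < L then 2*j else 2*L - (2*j+1)) := rfl
            rw [hrho]
            split_ifs <;> omega
          · have : 2*j + 2 = L := by omega
            rw [this]
            exact hg2
      · have hfj : f j = 2*L - (2*j+3) := by simp only [hfdef]; rw [if_neg hcase]
        rw [hfj]
        have hjge : L ≤ 2*j := by omega
        have hiL : 2*L - (2*j+3) < L := by omega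
        have hi2L : 2*L - (2*j+3) + 2 < L := by omega
        refine ⟨by omega, ?_, ?_⟩
        · rw [hg1 _ _ hiL]
          refine (psi_true_iff hD hL2 hiL false).mpr ?_
          have hz : zigR 0 L (2*L - (2*j+3)) = j + 1 := by
            rw [zig_odd (by omega)]; omega
          rw [hz, hpmj1]
          have hrho : rho L j = (if 2*j < L then 2*j else 2*L - (2*j+1)) := rfl
          rw [hrho]
          split_ifs <;> omega
        · rw [hg1 _ _ hi2L]
          refine (psi_false_iff hD hL2 hi2L true).mpr ?_
          have hz : zigR 0 L (2*L - (2*j+3) + 2) = j := by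
            rw [zig_odd (by omega)]; omega
          rw [hz, hpmj]
          have hrho : rho L (j+1) = (if 2*(j+1) < L then 2*(j+1) else 2*L - (2*(j+1)+1)) := rfl
          rw [hrho]
          split_ifs <;> omega
  -- finish by cardinality
  have hQP : {i : ℕ | i + 3 ≤ (psi D ++ [false]).length ∧
      (psi D ++ [false]).getD i false = true ∧ (psi D ++ [false]).getD (i + 2) true = false}
      = f '' {i : ℕ | i + 2 ≤ D.length ∧ D.getD i false = true ∧ D.getD (i + 1) true = false} := by
    ext i
    simp only [Set.mem_setOf_eq, Set.mem_image, hlenQ]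
    constructor
    · intro h
      obtain ⟨j, hMj, hfj⟩ := (key i).mp h
      exact ⟨j, (hP j).mpr hMj, hfj⟩
    · rintro ⟨j, hjP, rfl⟩
      exact (key (f j)).mpr ⟨j, (hP j).mp hjP, rfl⟩
  have hinj : Set.InjOn f
      {i : ℕ | i + 2 ≤ D.length ∧ D.getD i false = true ∧ D.getD (i + 1) true = false} := by
    intro a ha b hb hab
    simp only [Set.mem_setOf_eq] at ha hb
    have ha2 : a + 2 ≤ L := ha.1
    have hb2 : b + 2 ≤ L := hb.1
    simp only [hfdef] at hab
    split_ifs at hab <;> omega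
  rw [numPeaks, numUStarD, hQP, Set.ncard_image_of_injOn hinj]


end DyckBij
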